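/- Let α, γ be real numbers with γ not an integer. Then for all real t: ( (1−α)/(1−γ) ) · ₁F₁(α; γ; t) · ₁F₁(2−α; 2−γ; −t) − ( (γ−α)/(1−γ) ) · ₁F₁(1−α; 2−γ; −t) · ₁F₁(α−1; γ; t) = 1. -/

import Mathlib

open Finset

/-- Pochhammer symbol `(a)ₙ = a(a+1)⋯(a+n-1)` for natural `n`. -/
noncomputable def poch (a : ℝ) (n : ℕ) : ℝ := Polynomial.eval a (ascPochhammer ℝ n)

/-- Pochhammer symbol `(a)ₖ` for integer `k`: for `k ≥ 0` the ascending product,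
and `(a)₋ₖ = (-1)ᵏ/(1-a)ₖ` for `k ≥ 0`. -/
noncomputable def pochZ (a : ℝ) (k : ℤ) : ℝ :=
  if 0 ≤ k then poch a k.toNat else (-1) ^ (-k).toNat / poch (1 - a) (-k).toNat

/-- The (generally non-terminating) Clausen series `₃F₂(a,b,c;d,e;1)`. -/
noncomputable def F32 (a b c d e : ℝ) : ℝ :=
  ∑' n : ℕ, poch a n * poch b n * poch c n / (poch d n * poch e n * n.factorial)

/-- A terminating `₃F₂(a,b,c;d,e;1)` summed over `k = 0, …, N`. -/
noncomputable def F32sum (N : ℕ) (a b c d e : ℝ) : ℝ :=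
  ∑ k ∈ Finset.range (N + 1),
    poch a k * poch b k * poch c k / (poch d k * poch e k * k.factorial)

/-- The Kummer confluent hypergeometric function `₁F₁(a;b;x)`. -/
noncomputable def F11 (a b x : ℝ) : ℝ :=
  ∑' n : ℕ, poch a n * x ^ n / (poch b n * n.factorial)

/-! ### Auxiliary lemmas -/

lemma poch_zero' (a : ℝ) : poch a 0 = 1 := by simp [poch]

lemma poch_succ (a : ℝ) (n : ℕ) : poch a (n + 1) = poch a n * (a + n) := by
  simp [poch, ascPochhammer_succ_eval]

lemma poch_succ_left (a : ℝ) (n : ℕ) : poch a (n + 1) = a * poch (a + 1) n := by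
  simp [poch, ascPochhammer_succ_left, Polynomial.eval_comp]

lemma poch_ne_zero (γ : ℝ) (hγ : ∀ k : ℤ, γ ≠ (k : ℝ)) (n : ℕ) : poch γ n ≠ 0 := by
  induction n with
  | zero => simp [poch_zero']
  | succ n ih =>
    rw [poch_succ]
    refine mul_ne_zero ih fun h => hγ (-(n : ℤ)) ?_
    push_cast
    linarith

/-- Summability (in norm) of the ₁F₁ series. -/
lemma summable_norm_F11 (a b x : ℝ) (hb : ∀ n : ℕ, poch b n ≠ 0) :
    Summable fun n : ℕ => ‖poch a n * x ^ n / (poch b n * n.factorial)‖ := by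
  have hb' : ∀ n : ℕ, b + (n : ℝ) ≠ 0 := by
    intro n
    have := hb (n + 1)
    rw [poch_succ] at this
    exact right_ne_zero_of_mul this
  have hn1 : ∀ n : ℕ, ((n : ℝ) + 1) ≠ 0 := fun n => by positivity
  -- the ratio tends to 0
  have t2 : Filter.Tendsto (fun n : ℕ => x / ((n : ℝ) + 1)) Filter.atTop (nhds 0) := by
    have := Filter.Tendsto.div_atTop (f := fun _ : ℕ => x) (g := fun n : ℕ => (n : ℝ) + 1)
      tendsto_const_nhds (Filter.tendsto_atTop_add_const_right _ 1 tendsto_natCast_atTop_atTop)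
    simpa using this
  have t1 : Filter.Tendsto (fun n : ℕ => (a + (n : ℝ)) / (b + (n : ℝ)))
      Filter.atTop (nhds 1) := by
    have h0 : Filter.Tendsto (fun n : ℕ => (a - b) / (b + (n : ℝ))) Filter.atTop (nhds 0) :=
      Filter.Tendsto.div_atTop tendsto_const_nhds
        (Filter.tendsto_atTop_add_const_left _ b tendsto_natCast_atTop_atTop)
    have h1 : Filter.Tendsto (fun n : ℕ => 1 + (a - b) / (b + (n : ℝ)))
        Filter.atTop (nhds 1) := by
      simpa using (tendsto_const_nhds (x := (1 : ℝ)) (f := Filter.atTop (α := ℕ))).add h0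
    refine h1.congr fun n => ?_
    field_simp [hb' n]
    ring
  have ht : Filter.Tendsto
      (fun n : ℕ => |(a + (n : ℝ)) * x / ((b + (n : ℝ)) * ((n : ℝ) + 1))|)
      Filter.atTop (nhds 0) := by
    have : Filter.Tendsto
        (fun n : ℕ => ((a + (n : ℝ)) / (b + (n : ℝ))) * (x / ((n : ℝ) + 1)))
        Filter.atTop (nhds 0) := by
      simpa using t1.mul t2
    have h2 : Filter.Tendsto
        (fun n : ℕ => (a + (n : ℝ)) * x / ((b + (n : ℝ)) * ((n : ℝ) + 1)))
        Filter.atTop (nhds 0) := by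
      refine this.congr fun n => ?_
      rw [div_mul_div_comm]
    simpa using h2.abs
  apply summable_of_ratio_norm_eventually_le (r := 1 / 2) (by norm_num)
  filter_upwards [ht.eventually (eventually_le_nhds (by norm_num : (0 : ℝ) < 1 / 2))] with n hn
  simp only [norm_norm]
  have heq : poch a (n + 1) * x ^ (n + 1) / (poch b (n + 1) * (n + 1).factorial) =
      (poch a n * x ^ n / (poch b n * n.factorial)) *
        ((a + n) * x / ((b + n) * ((n : ℝ) + 1))) := by
    rw [poch_succ, poch_succ, pow_succ, Nat.factorial_succ]
    have h1 := hb n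
    have h2 := hb' n
    have h3 := hn1 n
    have h4 : (n.factorial : ℝ) ≠ 0 := Nat.cast_ne_zero.mpr n.factorial_ne_zero
    push_cast
    field_simp
  rw [heq, norm_mul]
  rw [Real.norm_eq_abs ((a + n) * x / ((b + n) * ((n : ℝ) + 1)))]
  calc ‖poch a n * x ^ n / (poch b n * ↑n.factorial)‖ *
        |(a + ↑n) * x / ((b + ↑n) * (↑n + 1))|
      ≤ ‖poch a n * x ^ n / (poch b n * ↑n.factorial)‖ * (1 / 2) := by
        exact mul_le_mul_of_nonneg_left hn (norm_nonneg _)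
    _ = 1 / 2 * ‖poch a n * x ^ n / (poch b n * ↑n.factorial)‖ := by ring

/-! ### Cauchy product coefficient sequences -/

noncomputable def kA (α γ : ℝ) (k : ℕ) : ℝ := poch α k / (poch γ k * k.factorial)
noncomputable def kB (α γ : ℝ) (k : ℕ) : ℝ :=
  poch (2 - α) k * (-1) ^ k / (poch (2 - γ) k * k.factorial)
noncomputable def kC (α γ : ℝ) (k : ℕ) : ℝ :=
  poch (1 - α) k * (-1) ^ k / (poch (2 - γ) k * k.factorial)
noncomputable def kD (α γ : ℝ) (k : ℕ) : ℝ := poch (α - 1) k / (poch γ k * k.factorial)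

/-- The telescoping certificate. -/
noncomputable def kH (α γ nn : ℝ) (m jj : ℕ) : ℝ :=
  poch α m * ((m : ℝ) + α - nn) * poch (1 - α) jj * (-1) ^ jj /
    (nn * poch γ m * m.factorial * poch (2 - γ) jj * jj.factorial)

section pointwise

variable (α γ : ℝ)

lemma key_first (hα : α ≠ 1) (hpγ : ∀ n : ℕ, poch γ n ≠ 0)
    (hp2γ : ∀ n : ℕ, poch (2 - γ) n ≠ 0) (j : ℕ) :
    (1 - α) * (kA α γ 0 * kB α γ (j + 1)) - (γ - α) * (kC α γ (j + 1) * kD α γ 0)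
      = kH α γ ((j : ℝ) + 1) 0 j := by
  have hA : (1 : ℝ) - α ≠ 0 := sub_ne_zero.mpr (fun h => hα h.symm)
  have h2γj : (2 - γ) + (j : ℝ) ≠ 0 := by
    have := hp2γ (j + 1); rw [poch_succ] at this; exact right_ne_zero_of_mul this
  have hp2j := hp2γ j
  have hfj : ((j.factorial : ℝ)) ≠ 0 := Nat.cast_ne_zero.mpr j.factorial_ne_zero
  have hj1 : ((j : ℝ) + 1) ≠ 0 := by positivity
  -- relation between poch (2-α) and poch (1-α)
  have hrel : (1 - α) * poch (2 - α) j = poch (1 - α) j * ((1 - α) + j) := by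
    have h1 : poch (1 - α) (j + 1) = (1 - α) * poch (1 - α + 1) j := poch_succ_left _ _
    have h2 : poch (1 - α) (j + 1) = poch (1 - α) j * ((1 - α) + j) := poch_succ _ _
    rw [show (1 - α + 1 : ℝ) = 2 - α by ring] at h1
    rw [← h1, h2]
  have e1 : poch (2 - α) (j + 1) = poch (1 - α) j * ((1 - α) + j) * ((2 - α) + j) / (1 - α) := by
    rw [poch_succ, ← hrel]; field_simp
  have e2 : poch (1 - α) (j + 1) = poch (1 - α) j * ((1 - α) + j) := poch_succ _ _
  simp only [kA, kB, kC, kD, kH, e1, e2, poch_succ (2 - γ) j, poch_zero', Nat.factorial_succ,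
    Nat.factorial_zero, pow_succ]
  push_cast
  field_simp
  ring

lemma key_last (hpγ : ∀ n : ℕ, poch γ n ≠ 0) (m : ℕ) :
    (1 - α) * (kA α γ (m + 1) * kB α γ 0) - (γ - α) * (kC α γ 0 * kD α γ (m + 1))
      = -kH α γ ((m : ℝ) + 1) m 0 := by
  have hγm : γ + (m : ℝ) ≠ 0 := by
    have := hpγ (m + 1); rw [poch_succ] at this; exact right_ne_zero_of_mul this
  have hpm := hpγ m
  have hfm : ((m.factorial : ℝ)) ≠ 0 := Nat.cast_ne_zero.mpr m.factorial_ne_zero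
  have hm1 : ((m : ℝ) + 1) ≠ 0 := by positivity
  have e3 : poch α (m + 1) = poch α m * (α + m) := poch_succ _ _
  have e4 : poch (α - 1) (m + 1) = (α - 1) * poch α m := by
    have := poch_succ_left (α - 1) m
    rw [show (α - 1 + 1 : ℝ) = α by ring] at this
    exact this
  simp only [kA, kB, kC, kD, kH, e3, e4, poch_succ γ m, poch_zero', Nat.factorial_succ,
    Nat.factorial_zero, pow_zero]
  push_cast
  field_simp
  ring

lemma key_mid (hα : α ≠ 1) (hpγ : ∀ n : ℕ, poch γ n ≠ 0)
    (hp2γ : ∀ n : ℕ, poch (2 - γ) n ≠ 0) (m j : ℕ) :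
    (1 - α) * (kA α γ (m + 1) * kB α γ (j + 1)) - (γ - α) * (kC α γ (j + 1) * kD α γ (m + 1))
      = kH α γ ((m : ℝ) + (j : ℝ) + 2) (m + 1) j - kH α γ ((m : ℝ) + (j : ℝ) + 2) m (j + 1) := by
  have hA : (1 : ℝ) - α ≠ 0 := sub_ne_zero.mpr (fun h => hα h.symm)
  have hγm : γ + (m : ℝ) ≠ 0 := by
    have := hpγ (m + 1); rw [poch_succ] at this; exact right_ne_zero_of_mul this
  have h2γj : (2 - γ) + (j : ℝ) ≠ 0 := by
    have := hp2γ (j + 1); rw [poch_succ] at this; exact right_ne_zero_of_mul this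
  have hpm := hpγ m
  have hp2j := hp2γ j
  have hfm : ((m.factorial : ℝ)) ≠ 0 := Nat.cast_ne_zero.mpr m.factorial_ne_zero
  have hfj : ((j.factorial : ℝ)) ≠ 0 := Nat.cast_ne_zero.mpr j.factorial_ne_zero
  have hm1 : ((m : ℝ) + 1) ≠ 0 := by positivity
  have hj1 : ((j : ℝ) + 1) ≠ 0 := by positivity
  have hnn : ((m : ℝ) + (j : ℝ) + 2) ≠ 0 := by positivity
  have hrel : (1 - α) * poch (2 - α) j = poch (1 - α) j * ((1 - α) + j) := by
    have h1 : poch (1 - α) (j + 1) = (1 - α) * poch (1 - α + 1) j := poch_succ_left _ _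
    have h2 : poch (1 - α) (j + 1) = poch (1 - α) j * ((1 - α) + j) := poch_succ _ _
    rw [show (1 - α + 1 : ℝ) = 2 - α by ring] at h1
    rw [← h1, h2]
  have e1 : poch (2 - α) (j + 1) = poch (1 - α) j * ((1 - α) + j) * ((2 - α) + j) / (1 - α) := by
    rw [poch_succ, ← hrel]; field_simp
  have e2 : poch (1 - α) (j + 1) = poch (1 - α) j * ((1 - α) + j) := poch_succ _ _
  have e3 : poch α (m + 1) = poch α m * (α + m) := poch_succ _ _
  have e4 : poch (α - 1) (m + 1) = (α - 1) * poch α m := by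
    have := poch_succ_left (α - 1) m
    rw [show (α - 1 + 1 : ℝ) = α by ring] at this
    exact this
  set M : ℝ := (m : ℝ) with hM
  set J : ℝ := (j : ℝ) with hJ
  set C : ℝ := poch α m * poch (1 - α) j * (-1) ^ j /
      (poch γ m * (γ + M) * (m.factorial : ℝ) * (M + 1) *
        poch (2 - γ) j * ((2 - γ) + J) * (j.factorial : ℝ) * (J + 1)) with hC
  have hT1 : (1 - α) * (kA α γ (m + 1) * kB α γ (j + 1))
      = C * (-((α + M) * ((1 - α) + J) * ((2 - α) + J))) := by
    simp only [kA, kB, e3, e1, poch_succ γ m, poch_succ (2 - γ) j, Nat.factorial_succ, pow_succ,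
      hC]
    push_cast
    simp only [← hM, ← hJ]
    field_simp
  have hT2 : (γ - α) * (kC α γ (j + 1) * kD α γ (m + 1))
      = C * (-((γ - α) * (α - 1) * ((1 - α) + J))) := by
    simp only [kC, kD, e2, e4, poch_succ γ m, poch_succ (2 - γ) j, Nat.factorial_succ, pow_succ,
      hC]
    push_cast
    simp only [← hM, ← hJ]
    field_simp
  have hT3 : kH α γ (M + J + 2) (m + 1) j
      = C * ((α + M) * ((M + 1) + α - (M + J + 2)) * ((2 - γ) + J) * (J + 1) / (M + J + 2)) := by
    simp only [kH, e3, poch_succ γ m, Nat.factorial_succ, hC]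
    push_cast
    simp only [← hM, ← hJ]
    field_simp
  have hT4 : kH α γ (M + J + 2) m (j + 1)
      = C * (-((M + α - (M + J + 2)) * ((1 - α) + J) * (γ + M) * (M + 1) / (M + J + 2))) := by
    simp only [kH, e2, poch_succ (2 - γ) j, Nat.factorial_succ, pow_succ, hC]
    push_cast
    simp only [← hM, ← hJ]
    field_simp
  have hscalar : (-((α + M) * ((1 - α) + J) * ((2 - α) + J))) - (-((γ - α) * (α - 1) * ((1 - α) + J)))
      = ((α + M) * ((M + 1) + α - (M + J + 2)) * ((2 - γ) + J) * (J + 1) / (M + J + 2))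
        - (-((M + α - (M + J + 2)) * ((1 - α) + J) * (γ + M) * (M + 1) / (M + J + 2))) := by
    field_simp
    ring
  rw [hT1, hT2, hT3, hT4]
  linear_combination C * hscalar

end pointwise

/-- The key terminating-sum identity, `n = N + 1 ≥ 1`. -/
lemma key_sum (α γ : ℝ) (hpγ : ∀ n : ℕ, poch γ n ≠ 0)
    (hp2γ : ∀ n : ℕ, poch (2 - γ) n ≠ 0) (N : ℕ) :
    (1 - α) * ∑ k ∈ range (N + 2), kA α γ k * kB α γ (N + 1 - k)
      = (γ - α) * ∑ k ∈ range (N + 2), kC α γ k * kD α γ (N + 1 - k) := by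
  have hrefl : ∑ k ∈ range (N + 2), kC α γ k * kD α γ (N + 1 - k)
      = ∑ k ∈ range (N + 2), kC α γ (N + 1 - k) * kD α γ k := by
    rw [← Finset.sum_range_reflect]
    refine Finset.sum_congr rfl fun k hk => ?_
    have hk' : k < N + 2 := mem_range.mp hk
    have h1 : N + 2 - 1 - k = N + 1 - k := by omega
    have h2 : N + 1 - (N + 1 - k) = k := by omega
    rw [h1, h2]
  rw [hrefl]
  by_cases hα : α = 1
  · subst hα
    have hz : ∀ n : ℕ, poch (0 : ℝ) (n + 1) = 0 := by
      intro n; rw [poch_succ_left]; simp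
    have hC0 : ∀ n : ℕ, kC 1 γ (n + 1) = 0 := by
      intro n; simp [kC, hz n]
    have hD0 : ∀ n : ℕ, kD 1 γ (n + 1) = 0 := by
      intro n; simp [kD, hz n]
    simp only [sub_self, zero_mul]
    rw [Finset.sum_eq_zero, mul_zero]
    intro k hk
    match k with
    | 0 => simp [hC0 N]
    | k + 1 => simp [hD0 k]
  · rw [← sub_eq_zero, Finset.mul_sum, Finset.mul_sum, ← Finset.sum_sub_distrib]
    set w : ℕ → ℝ := fun k =>
      (1 - α) * (kA α γ k * kB α γ (N + 1 - k)) - (γ - α) * (kC α γ (N + 1 - k) * kD α γ k)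
      with hw
    show ∑ k ∈ range (N + 2), w k = 0
    set H : ℕ → ℝ := fun i => kH α γ ((N : ℝ) + 1) i (N - i) with hH
    have hmid : ∀ i ∈ range N, w (i + 1) = H (i + 1) - H i := by
      intro i hi
      have hiN : i < N := mem_range.mp hi
      have h1 : N + 1 - (i + 1) = (N - 1 - i) + 1 := by omega
      have h2 : N - (i + 1) = N - 1 - i := by omega
      have h3 : N - i = (N - 1 - i) + 1 := by omega
      have hc : ((N : ℝ) + 1) = (i : ℝ) + ((N - 1 - i : ℕ) : ℝ) + 2 := by
        have h0 : (N - 1 - i) + i + 2 = N + 1 := by omega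
        have h0' := congrArg (fun x : ℕ => (x : ℝ)) h0
        push_cast at h0'
        linarith
      rw [hw, hH]
      simp only [h1, h2, h3, hc]
      exact key_mid α γ hα hpγ hp2γ i (N - 1 - i)
    have hsum_mid : ∑ i ∈ range N, w (i + 1) = H N - H 0 := by
      rw [Finset.sum_congr rfl hmid]
      exact Finset.sum_range_sub H N
    have hlast : w (N + 1) = -H N := by
      rw [hw, hH]
      have h1 : N + 1 - (N + 1) = 0 := by omega
      have h2 : N - N = 0 := by omega
      simp only [h1, h2]
      exact key_last α γ hpγ N
    have hfirst : w 0 = H 0 := by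
      rw [hw, hH]
      have h1 : N + 1 - 0 = N + 1 := rfl
      have h2 : N - 0 = N := rfl
      simp only [h1, h2]
      exact key_first α γ hα hpγ hp2γ N
    rw [Finset.sum_range_succ' w (N + 1), Finset.sum_range_succ (fun i => w (i + 1)) N,
      hsum_mid, hlast, hfirst]
    ring

set_option maxRecDepth 8000 in
theorem Kummer_example4 (α γ : ℝ) (hγ : ∀ k : ℤ, γ ≠ (k : ℝ)) (t : ℝ) :
    (1 - α) / (1 - γ) * F11 α γ t * F11 (2 - α) (2 - γ) (-t) -
      (γ - α) / (1 - γ) * F11 (1 - α) (2 - γ) (-t) * F11 (α - 1) γ t = 1 := by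
  have hγ1 : γ ≠ 1 := by simpa using hγ 1
  have h1γ : (1 : ℝ) - γ ≠ 0 := sub_ne_zero.mpr fun h => hγ1 h.symm
  have hpγ : ∀ n : ℕ, poch γ n ≠ 0 := poch_ne_zero γ hγ
  have h2γ : ∀ k : ℤ, (2 - γ) ≠ (k : ℝ) := by
    intro k h
    exact hγ (2 - k) (by push_cast; linarith)
  have hp2γ : ∀ n : ℕ, poch (2 - γ) n ≠ 0 := poch_ne_zero _ h2γ
  set f1 : ℕ → ℝ := fun n => poch α n * t ^ n / (poch γ n * n.factorial) with hf1
  set f2 : ℕ → ℝ := fun n => poch (2 - α) n * (-t) ^ n / (poch (2 - γ) n * n.factorial) with hf2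
  set f3 : ℕ → ℝ := fun n => poch (1 - α) n * (-t) ^ n / (poch (2 - γ) n * n.factorial) with hf3
  set f4 : ℕ → ℝ := fun n => poch (α - 1) n * t ^ n / (poch γ n * n.factorial) with hf4
  have s1 := summable_norm_F11 α γ t hpγ
  have s2 := summable_norm_F11 (2 - α) (2 - γ) (-t) hp2γ
  have s3 := summable_norm_F11 (1 - α) (2 - γ) (-t) hp2γ
  have s4 := summable_norm_F11 (α - 1) γ t hpγ
  have hF1 : F11 α γ t = ∑' n, f1 n := rfl
  have hF2 : F11 (2 - α) (2 - γ) (-t) = ∑' n, f2 n := rfl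
  have hF3 : F11 (1 - α) (2 - γ) (-t) = ∑' n, f3 n := rfl
  have hF4 : F11 (α - 1) γ t = ∑' n, f4 n := rfl
  rw [hF1, hF2, hF3, hF4, mul_assoc, mul_assoc,
    tsum_mul_tsum_eq_tsum_sum_range_of_summable_norm s1 s2,
    tsum_mul_tsum_eq_tsum_sum_range_of_summable_norm s3 s4,
    ← tsum_mul_left, ← tsum_mul_left]
  have sum12 : Summable fun n => (1 - α) / (1 - γ) * ∑ k ∈ range (n + 1), f1 k * f2 (n - k) :=
    ((summable_norm_sum_mul_range_of_summable_norm s1 s2).of_norm).mul_left _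
  have sum34 : Summable fun n => (γ - α) / (1 - γ) * ∑ k ∈ range (n + 1), f3 k * f4 (n - k) :=
    ((summable_norm_sum_mul_range_of_summable_norm s3 s4).of_norm).mul_left _
  rw [← sum12.tsum_sub sum34]
  have hterm : ∀ n : ℕ,
      ((1 - α) / (1 - γ) * ∑ k ∈ range (n + 1), f1 k * f2 (n - k)) -
        ((γ - α) / (1 - γ) * ∑ k ∈ range (n + 1), f3 k * f4 (n - k))
      = if n = 0 then 1 else 0 := by
    intro n
    have hneg : ∀ i : ℕ, (-t) ^ i = (-1 : ℝ) ^ i * t ^ i := fun i => by rw [neg_pow]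
    have e12 : ∑ k ∈ range (n + 1), f1 k * f2 (n - k)
        = (∑ k ∈ range (n + 1), kA α γ k * kB α γ (n - k)) * t ^ n := by
      rw [Finset.sum_mul]
      refine Finset.sum_congr rfl fun k hk => ?_
      have hk' : k ≤ n := Nat.lt_succ_iff.mp (mem_range.mp hk)
      obtain ⟨j, rfl⟩ := Nat.exists_eq_add_of_le hk'
      rw [Nat.add_sub_cancel_left]
      simp only [hf1, hf2, kA, kB, hneg, pow_add]
      ring
    have e34 : ∑ k ∈ range (n + 1), f3 k * f4 (n - k)
        = (∑ k ∈ range (n + 1), kC α γ k * kD α γ (n - k)) * t ^ n := by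
      rw [Finset.sum_mul]
      refine Finset.sum_congr rfl fun k hk => ?_
      have hk' : k ≤ n := Nat.lt_succ_iff.mp (mem_range.mp hk)
      obtain ⟨j, rfl⟩ := Nat.exists_eq_add_of_le hk'
      rw [Nat.add_sub_cancel_left]
      simp only [hf3, hf4, kC, kD, hneg, pow_add]
      ring
    rw [e12, e34]
    rcases n with _ | N
    · have hend : (1 - α) / (1 - γ) - (γ - α) / (1 - γ) = 1 := by
        rw [div_sub_div_same, div_eq_one_iff_eq h1γ]; ring
      simpa [kA, kB, kC, kD, poch_zero'] using hend
    · rw [if_neg (Nat.succ_ne_zero N)]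
      have hkey := key_sum α γ hpγ hp2γ N
      linear_combination (t ^ (N + 1) / (1 - γ)) * hkey
  rw [tsum_congr hterm]
  exact tsum_ite_eq 0 1
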